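/- The complete elliptic integral ∫_0^{2π} ( cos²φ + ε sin²φ )^{−1/2} dφ satisfies the logarithmic asymptotics lim_{ε→0⁺} ( ∫_0^{2π} ( cos²φ + ε sin²φ )^{−1/2} dφ ) / |log ε| = 2. -/

import Mathlib

open MeasureTheory Filter Metric Set
open scoped Topology ENNReal

noncomputable section

namespace EllipticAux

open Real

def f (ε φ : ℝ) : ℝ := (Real.cos φ ^ 2 + ε * Real.sin φ ^ 2) ^ (-(1 : ℝ) / 2)

lemma base_pos {ε : ℝ} (hε : 0 < ε) (hε1 : ε ≤ 1) (φ : ℝ) :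
    0 < cos φ ^ 2 + ε * sin φ ^ 2 := by
  nlinarith [sin_sq_add_cos_sq φ, sq_nonneg (cos φ), sq_nonneg (sin φ)]

lemma f_cont {ε : ℝ} (hε : 0 < ε) (hε1 : ε ≤ 1) : Continuous (f ε) := by
  apply Continuous.rpow_const (by continuity)
  intro φ; exact Or.inl (base_pos hε hε1 φ).ne'

lemma rpow_sq_neg_half {A : ℝ} (hA : 0 < A) : (A ^ 2) ^ (-(1 : ℝ) / 2) = A⁻¹ := by
  rw [← Real.rpow_natCast A 2, ← Real.rpow_mul hA.le,
    show ((2 : ℕ) : ℝ) * (-(1 : ℝ) / 2) = -1 by push_cast; ring, Real.rpow_neg_one]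

lemma f_add_pi {ε : ℝ} (φ : ℝ) : f ε (φ + π) = f ε φ := by
  simp [f, Real.cos_add_pi, Real.sin_add_pi, neg_sq]

lemma f_pi_sub {ε : ℝ} (φ : ℝ) : f ε (π - φ) = f ε φ := by
  simp [f, Real.cos_pi_sub, Real.sin_pi_sub, neg_sq]

lemma integral_eq_four {ε : ℝ} (hε : 0 < ε) (hε1 : ε ≤ 1) :
    ∫ φ in Set.Ioo (0 : ℝ) (2 * π), f ε φ = 4 * ∫ φ in (0 : ℝ)..(π / 2), f ε φ := by
  have hc := f_cont hε hε1
  have h2 : (0 : ℝ) ≤ 2 * π := by positivity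
  rw [← integral_Ioc_eq_integral_Ioo, ← intervalIntegral.integral_of_le h2]
  have h1 : ∫ φ in π..(2 * π), f ε φ = ∫ φ in (0 : ℝ)..π, f ε φ := by
    have h := intervalIntegral.integral_comp_add_right (a := (0:ℝ)) (b := π) (f ε) π
    simp only [zero_add] at h
    rw [show π + π = 2 * π by ring] at h
    rw [← h]
    exact intervalIntegral.integral_congr fun x _ => f_add_pi x
  have h3 : ∫ φ in (π/2)..π, f ε φ = ∫ φ in (0 : ℝ)..(π / 2), f ε φ := by
    have h := intervalIntegral.integral_comp_sub_left (a := (0:ℝ)) (b := π/2) (f ε) π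
    rw [show π - π / 2 = π / 2 by ring, sub_zero] at h
    rw [← h]
    exact intervalIntegral.integral_congr fun x _ => f_pi_sub x
  have hs1 : ∫ φ in (0:ℝ)..(2*π), f ε φ
      = (∫ φ in (0:ℝ)..π, f ε φ) + ∫ φ in π..(2*π), f ε φ :=
    (intervalIntegral.integral_add_adjacent_intervals (hc.intervalIntegrable _ _)
      (hc.intervalIntegrable _ _)).symm
  have hs2 : ∫ φ in (0:ℝ)..π, f ε φ
      = (∫ φ in (0:ℝ)..(π/2), f ε φ) + ∫ φ in (π/2)..π, f ε φ :=
    (intervalIntegral.integral_add_adjacent_intervals (hc.intervalIntegrable _ _)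
      (hc.intervalIntegrable _ _)).symm
  rw [hs1, h1, hs2, h3]; ring

lemma lower {ε : ℝ} (hε : 0 < ε) (hε1 : ε < 1) :
    -Real.log ε / 2 ≤ ∫ φ in (0 : ℝ)..(π / 2), f ε φ := by
  set s := Real.sqrt ε with hs
  have hs0 : 0 < s := Real.sqrt_pos.mpr hε
  have hss : s ^ 2 = ε := Real.sq_sqrt hε.le
  have hπ := Real.pi_gt_three
  -- pointwise bound
  have hkey : ∀ φ ∈ Set.Icc (0 : ℝ) (π / 2), (π / 2 + s - φ)⁻¹ ≤ f ε φ := by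
    intro φ ⟨hφ0, hφ2⟩
    have hA : 0 < π / 2 + s - φ := by linarith
    have hcos0 : 0 ≤ cos φ := Real.cos_nonneg_of_mem_Icc ⟨by linarith, hφ2⟩
    have hcos : cos φ ≤ π / 2 - φ := by
      have h := Real.sin_le (x := π / 2 - φ) (by linarith)
      rwa [Real.sin_pi_div_two_sub] at h
    have hbase : cos φ ^ 2 + ε * sin φ ^ 2 ≤ (π / 2 + s - φ) ^ 2 := by
      have hsin : sin φ ^ 2 ≤ 1 := sin_sq_le_one φ
      nlinarith [sq_nonneg (sin φ)]
    calc (π / 2 + s - φ)⁻¹ = ((π / 2 + s - φ) ^ 2) ^ (-(1 : ℝ) / 2) :=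
          (rpow_sq_neg_half hA).symm
      _ ≤ f ε φ :=
          Real.rpow_le_rpow_of_nonpos (base_pos hε hε1.le φ) hbase (by norm_num)
  -- integral of the lower bound
  have hint : ∫ φ in (0 : ℝ)..(π / 2), (π / 2 + s - φ)⁻¹
      = Real.log (π / 2 + s) - Real.log s := by
    have h := intervalIntegral.integral_comp_sub_left (a := (0:ℝ)) (b := π/2)
      (fun x : ℝ => x⁻¹) (π / 2 + s)
    rw [show π / 2 + s - π / 2 = s by ring, sub_zero] at h
    rw [h, integral_inv_of_pos hs0 (by linarith), Real.log_div (by linarith) hs0.ne']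
  have hgint : IntervalIntegrable (fun φ : ℝ => (π / 2 + s - φ)⁻¹) volume 0 (π / 2) := by
    apply ContinuousOn.intervalIntegrable
    apply ContinuousOn.inv₀ (by fun_prop)
    intro x hx
    rw [Set.uIcc_of_le (by positivity)] at hx
    have := hx.2
    intro h0; nlinarith [hx.2]
  have hmono := intervalIntegral.integral_mono_on (by positivity) hgint
    ((f_cont hε hε1.le).intervalIntegrable _ _) hkey
  rw [hint] at hmono
  have hlogs : Real.log s = Real.log ε / 2 := Real.log_sqrt hε.le
  have h1 : (0:ℝ) ≤ Real.log (π / 2 + s) := Real.log_nonneg (by linarith)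
  linarith

lemma upper {ε : ℝ} (hε : 0 < ε) (hε1 : ε < 1) :
    ∫ φ in (0 : ℝ)..(π / 2), f ε φ ≤ -Real.log ε / 2 + Real.log π + 2 := by
  set s := Real.sqrt ε with hs
  have hs0 : 0 < s := Real.sqrt_pos.mpr hε
  have hss : s ^ 2 = ε := Real.sq_sqrt hε.le
  have hs1 : s < 1 := by
    rw [hs, show (1:ℝ) = Real.sqrt 1 by simp]
    exact Real.sqrt_lt_sqrt hε.le hε1
  have hπ := Real.pi_gt_three
  set b := π / 2 - s with hb
  clear_value s; clear_value b
  have hb0 : 0 < b := by rw [hb]; linarith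
  have hbπ : b < π / 2 := by rw [hb]; linarith
  -- split
  have hsplit : ∫ φ in (0 : ℝ)..(π / 2), f ε φ
      = (∫ φ in (0:ℝ)..b, f ε φ) + ∫ φ in b..(π/2), f ε φ :=
    (intervalIntegral.integral_add_adjacent_intervals
      ((f_cont hε hε1.le).intervalIntegrable _ _)
      ((f_cont hε hε1.le).intervalIntegrable _ _)).symm
  -- Piece 1 : f ≤ sec on [0, b]
  have hcospos : ∀ x ∈ Set.Icc (0:ℝ) b, 0 < cos x := by
    intro x ⟨hx0, hxb⟩
    exact Real.cos_pos_of_mem_Ioo ⟨by linarith, by linarith⟩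
  have hkey1 : ∀ φ ∈ Set.Icc (0:ℝ) b, f ε φ ≤ (cos φ)⁻¹ := by
    intro φ hφ
    have hc := hcospos φ hφ
    have hbase : cos φ ^ 2 ≤ cos φ ^ 2 + ε * sin φ ^ 2 := by nlinarith [sq_nonneg (sin φ)]
    calc f ε φ ≤ (cos φ ^ 2) ^ (-(1:ℝ)/2) :=
          Real.rpow_le_rpow_of_nonpos (by positivity) hbase (by norm_num)
      _ = (cos φ)⁻¹ := rpow_sq_neg_half hc
  have hsecint : IntervalIntegrable (fun x : ℝ => (cos x)⁻¹) volume 0 b := by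
    apply ContinuousOn.intervalIntegrable
    apply ContinuousOn.inv₀ (Real.continuous_cos.continuousOn)
    intro x hx
    rw [Set.uIcc_of_le hb0.le] at hx
    exact (hcospos x hx).ne'
  -- FTC for sec
  have hFTC : ∫ x in (0:ℝ)..b, (cos x)⁻¹
      = (Real.log (1 + sin b) - Real.log (cos b)) := by
    have hderiv : ∀ x ∈ Set.uIcc (0:ℝ) b,
        HasDerivAt (fun y => Real.log (1 + sin y) - Real.log (cos y)) (cos x)⁻¹ x := by
      intro x hx
      rw [Set.uIcc_of_le hb0.le] at hx
      have hc := hcospos x hx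
      have hsα : 0 < 1 + sin x := by nlinarith [Real.sin_sq_add_cos_sq x, sq_nonneg (1 + Real.sin x)]
      have h1 : HasDerivAt (fun y : ℝ => 1 + sin y) (cos x) x :=
        (Real.hasDerivAt_sin x).const_add 1
      have h2 := h1.log hsα.ne'
      have h3 := (Real.hasDerivAt_cos x).log hc.ne'
      have h := h2.sub h3
      convert h using 1
      have hsc := Real.sin_sq_add_cos_sq x
      · rfl
      · rfl
      · rfl
      rw [inv_eq_one_div, div_sub_div _ _ hsα.ne' hc.ne', div_eq_div_iff hc.ne' (mul_ne_zero hsα.ne' hc.ne')]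
      nlinarith [Real.sin_sq_add_cos_sq x]
    rw [intervalIntegral.integral_eq_sub_of_hasDerivAt hderiv hsecint]
    simp
  have hp1 : ∫ x in (0:ℝ)..b, f ε x ≤ Real.log π - Real.log ε / 2 := by
    have hm := intervalIntegral.integral_mono_on hb0.le
      ((f_cont hε hε1.le).intervalIntegrable _ _) hsecint hkey1
    rw [hFTC] at hm
    have hcb : cos b = sin s := by rw [hb, Real.cos_pi_div_two_sub]
    have hsinsb : 2 / π * s ≤ sin s := Real.mul_le_sin hs0.le (by linarith)
    have hl1 : Real.log (1 + sin b) ≤ Real.log 2 := by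
      have hsb : 0 ≤ sin b := Real.sin_nonneg_of_nonneg_of_le_pi hb0.le (by linarith)
      apply Real.log_le_log (by linarith)
      nlinarith [Real.sin_le_one b]
    have hl2 : Real.log (2 / π * s) ≤ Real.log (cos b) := by
      rw [hcb]; exact Real.log_le_log (by positivity) hsinsb
    have hl3 : Real.log (2 / π * s) = Real.log 2 - Real.log π + Real.log ε / 2 := by
      rw [Real.log_mul (by positivity) hs0.ne', Real.log_div two_ne_zero (by positivity),
        hs, Real.log_sqrt hε.le]
    linarith
  -- Piece 2 : f ≤ 2/s on [b, π/2]
  have hkey2 : ∀ φ ∈ Set.Icc b (π/2), f ε φ ≤ 2 * s⁻¹ := by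
    intro φ ⟨hφb, hφ2⟩
    have hsin : 1 / 2 ≤ sin φ := by
      have h1 : cos s ≤ cos (π / 2 - φ) := by
        apply Real.cos_le_cos_of_nonneg_of_le_pi (by linarith) (by linarith) (by rw [hb] at hφb; linarith)
      rw [Real.cos_pi_div_two_sub] at h1
      have h2 : 1 - s ^ 2 / 2 ≤ cos s := Real.one_sub_sq_div_two_le_cos
      nlinarith
    have hsin2 : 1 / 4 ≤ sin φ ^ 2 := by nlinarith [sq_nonneg (Real.sin φ - 1/2)]
    have hbase : ε / 4 ≤ cos φ ^ 2 + ε * sin φ ^ 2 := by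
      nlinarith [sq_nonneg (cos φ), mul_nonneg hε.le (show (0:ℝ) ≤ sin φ ^ 2 - 1/4 by linarith)]
    have heq : (ε / 4 : ℝ) ^ (-(1:ℝ)/2) = 2 * s⁻¹ := by
      rw [show ε / 4 = (s / 2) ^ 2 by rw [div_pow, hss]; norm_num, rpow_sq_neg_half (by positivity)]
      rw [inv_div]
      ring
    calc f ε φ ≤ (ε / 4 : ℝ) ^ (-(1:ℝ)/2) :=
          Real.rpow_le_rpow_of_nonpos (by positivity) hbase (by norm_num)
      _ = 2 * s⁻¹ := heq
  have hp2 : ∫ x in b..(π/2), f ε x ≤ 2 := by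
    have hm := intervalIntegral.integral_mono_on hbπ.le
      ((f_cont hε hε1.le).intervalIntegrable _ _)
      (intervalIntegrable_const : IntervalIntegrable (fun _ => 2 * s⁻¹) volume b (π/2)) hkey2
    rw [intervalIntegral.integral_const, smul_eq_mul] at hm
    have : (π / 2 - b) * (2 * s⁻¹) = 2 := by
      rw [hb]; field_simp; ring
    linarith
  rw [hsplit]; linarith


end EllipticAux

/-- **Logarithmic asymptotics of the complete elliptic integral of the first kind.**
`lim_{ε→0⁺} (∫₀^{2π} (cos²φ + ε sin²φ)^{-1/2} dφ) / |log ε| = 2`. -/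
theorem elliptic_integral_log_asymptotics :
    Tendsto (fun ε : ℝ =>
        (∫ φ in Set.Ioo (0 : ℝ) (2 * Real.pi),
          (Real.cos φ ^ 2 + ε * Real.sin φ ^ 2) ^ (-(1 : ℝ) / 2)) / |Real.log ε|)
      (𝓝[>] 0) (𝓝 2) := by
  have hπ := Real.pi_gt_three
  have hlogπ : (0:ℝ) ≤ Real.log Real.pi := Real.log_nonneg (by linarith)
  have htop : Tendsto (fun ε : ℝ => -Real.log ε) (𝓝[>] 0) atTop :=
    tendsto_neg_atBot_atTop.comp Real.tendsto_log_nhdsGT_zero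
  have hinv : Tendsto (fun ε : ℝ => (-Real.log ε)⁻¹) (𝓝[>] 0) (𝓝 0) :=
    htop.inv_tendsto_atTop
  have hub : Tendsto (fun ε : ℝ => 2 + (4 * Real.log Real.pi + 8) * (-Real.log ε)⁻¹)
      (𝓝[>] 0) (𝓝 2) := by
    have h := ((hinv.const_mul (4 * Real.log Real.pi + 8)).const_add 2)
    simpa using h
  refine tendsto_of_tendsto_of_tendsto_of_le_of_le' tendsto_const_nhds hub ?_ ?_ <;>
    filter_upwards [Ioo_mem_nhdsGT_of_mem
      (by norm_num : (0:ℝ) ∈ Set.Ico (0:ℝ) 1)] with ε hε <;>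
    obtain ⟨h0, h1⟩ := hε <;>
    have hlog : Real.log ε < 0 := Real.log_neg h0 h1 <;>
    have hquarter := EllipticAux.integral_eq_four h0 h1.le <;>
    rw [show (∫ φ in Set.Ioo (0 : ℝ) (2 * Real.pi),
          (Real.cos φ ^ 2 + ε * Real.sin φ ^ 2) ^ (-(1 : ℝ) / 2))
        = ∫ φ in Set.Ioo (0 : ℝ) (2 * Real.pi), EllipticAux.f ε φ from rfl,
      hquarter, abs_of_neg hlog]
  · have := EllipticAux.lower h0 h1
    rw [le_div_iff₀ (by linarith)]
    linarith
  · have := EllipticAux.upper h0 h1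
    rw [div_le_iff₀ (by linarith)]
    have hinv2 : (-Real.log ε)⁻¹ * (-Real.log ε) = 1 :=
      inv_mul_cancel₀ (by linarith)
    nlinarith [this, hlog]
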